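/- For any attractor A of the transition system of a Boolean network, the greatest fixed point of the operator F(T) = T \ (pre(post(T) \ T) ∩ T) starting from the weak basin of A equals the strong basin of A; that is, F^∞(basW(A)) = basS(A). -/

import Mathlib

/-- Reachability: reflexive-transitive closure of the transition relation. -/
def reach {σ : Type*} (r : σ → σ → Prop) : σ → σ → Prop := Relation.ReflTransGen r

/-- An attractor: a set `A` with `reach(s) = A` for every `s ∈ A`. -/
def IsAttractor {σ : Type*} (r : σ → σ → Prop) (A : Set σ) : Prop :=
  ∀ s ∈ A, {t | reach r s t} = A

/-- Weak basin of attraction. -/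
def basW {σ : Type*} (r : σ → σ → Prop) (A : Set σ) : Set σ :=
  {s | ∃ t ∈ A, reach r s t}

/-- Strong basin of attraction. -/
def basS {σ : Type*} (r : σ → σ → Prop) (A : Set σ) : Set σ :=
  basW r A \ ⋃ A' ∈ {B : Set σ | IsAttractor r B ∧ B ≠ A}, basW r A'

/-- One-step predecessors of a set of states. -/
def pre {σ : Type*} (r : σ → σ → Prop) (T : Set σ) : Set σ := {s | ∃ t ∈ T, r s t}

/-- One-step successors of a set of states. -/
def post {σ : Type*} (r : σ → σ → Prop) (T : Set σ) : Set σ := {t | ∃ s ∈ T, r s t}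

/-- The operator `F(T) = T \ (pre(post(T) \ T) ∩ T)`. -/
def Fop {σ : Type*} (r : σ → σ → Prop) (T : Set σ) : Set σ :=
  T \ (pre r (post r T \ T) ∩ T)

lemma Fop_subset {σ : Type*} (r : σ → σ → Prop) (T : Set σ) : Fop r T ⊆ T :=
  Set.diff_subset

lemma mem_basS_iff {σ : Type*} (r : σ → σ → Prop) (A : Set σ) (s : σ) :
    s ∈ basS r A ↔ s ∈ basW r A ∧ ∀ B : Set σ, IsAttractor r B → B ≠ A → s ∉ basW r B := by
  simp only [basS, Set.mem_diff, Set.mem_iUnion, Set.mem_setOf_eq, not_exists]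
  constructor
  · rintro ⟨h1, h2⟩
    exact ⟨h1, fun B hB hne => h2 B ⟨hB, hne⟩⟩
  · rintro ⟨h1, h2⟩
    exact ⟨h1, fun B ⟨hB, hne⟩ => h2 B hB hne⟩

lemma basW_step {σ : Type*} {r : σ → σ → Prop} {A : Set σ} {s t : σ}
    (h : r s t) (ht : t ∈ basW r A) : s ∈ basW r A := by
  obtain ⟨a, ha, hr⟩ := ht
  exact ⟨a, ha, Relation.ReflTransGen.head h hr⟩

lemma basS_step {σ : Type*} {r : σ → σ → Prop}
    (hall : ∀ s : σ, ∃ A : Set σ, IsAttractor r A ∧ s ∈ basW r A)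
    {A : Set σ} {s t : σ} (hs : s ∈ basS r A) (h : r s t) : t ∈ basS r A := by
  rw [mem_basS_iff] at hs ⊢
  obtain ⟨hsW, hsN⟩ := hs
  have htN : ∀ B : Set σ, IsAttractor r B → B ≠ A → t ∉ basW r B :=
    fun B hB hne htB => hsN B hB hne (basW_step h htB)
  obtain ⟨A', hA', htA'⟩ := hall t
  by_cases hcase : A' = A
  · exact ⟨hcase ▸ htA', htN⟩
  · exact absurd htA' (htN A' hA' hcase)

lemma basS_subset_iter {σ : Type*} {r : σ → σ → Prop}
    (hall : ∀ s : σ, ∃ A : Set σ, IsAttractor r A ∧ s ∈ basW r A)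
    {A : Set σ} : ∀ k : ℕ, basS r A ⊆ (Fop r)^[k] (basW r A) := by
  intro k
  induction k with
  | zero => exact fun s hs => hs.1
  | succ k ih =>
    rw [Function.iterate_succ_apply']
    intro s hs
    refine ⟨ih hs, ?_⟩
    rintro ⟨⟨t, ⟨htp, htn⟩, hst⟩, _⟩
    exact htn (ih (basS_step hall hs hst))

lemma exists_stab {σ : Type*} [Fintype σ] (g : ℕ → Set σ)
    (h : ∀ k, g (k + 1) ⊆ g k) : ∃ K, g (K + 1) = g K := by
  have hne : (Set.range fun k => (g k).ncard).Nonempty := ⟨_, 0, rfl⟩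
  obtain ⟨K, hK⟩ := Nat.sInf_mem hne
  simp only at hK
  refine ⟨K, Set.eq_of_subset_of_ncard_le (h K) ?_ (Set.toFinite _)⟩
  rw [hK]
  exact Nat.sInf_le ⟨K + 1, rfl⟩

/-- For any attractor `A`, the greatest fixed point of `F` starting from the weak basin of `A`
equals the strong basin of `A`: `F^∞(basW(A)) = basS(A)`. -/
theorem stmt5 {σ : Type*} [Fintype σ] (r : σ → σ → Prop)
    (hall : ∀ s : σ, ∃ A : Set σ, IsAttractor r A ∧ s ∈ basW r A)
    (A : Set σ) (hA : IsAttractor r A) :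
    (⋂ k : ℕ, (Fop r)^[k] (basW r A)) = basS r A := by
  have hiter_sub : ∀ k : ℕ, (Fop r)^[k] (basW r A) ⊆ basW r A := by
    intro k
    induction k with
    | zero => exact subset_rfl
    | succ k ih =>
      rw [Function.iterate_succ_apply']
      exact (Fop_subset r _).trans ih
  obtain ⟨K, hK⟩ := exists_stab (fun k => (Fop r)^[k] (basW r A)) (by
    intro k
    rw [Function.iterate_succ_apply']
    exact Fop_subset r _)
  set T := (Fop r)^[K] (basW r A) with hT
  have hfix : Fop r T = T := by
    have h2 := hK
    rw [Function.iterate_succ_apply'] at h2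
    exact h2
  -- T is forward closed
  have hfwd : ∀ s ∈ T, ∀ t, r s t → t ∈ T := by
    intro s hs t hst
    by_contra htn
    have : s ∉ Fop r T := by
      intro hc
      exact hc.2 ⟨⟨t, ⟨⟨s, hs, hst⟩, htn⟩, hst⟩, hs⟩
    rw [hfix] at this
    exact this hs
  have hreach : ∀ s ∈ T, ∀ t, reach r s t → t ∈ T := by
    intro s hs t hst
    induction hst with
    | refl => exact hs
    | tail _ h ih => exact hfwd _ ih _ h
  apply subset_antisymm
  · intro x hx
    rw [Set.mem_iInter] at hx
    rw [mem_basS_iff]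
    refine ⟨hx 0, ?_⟩
    intro B hB hne hxB
    have hxT : x ∈ T := hx K
    obtain ⟨b, hbB, hxb⟩ := hxB
    have hbT : b ∈ T := hreach x hxT b hxb
    obtain ⟨a, haA, hba⟩ := hiter_sub K hbT
    have haB : a ∈ B := by
      have := hB b hbB
      rw [← this]; exact hba
    have := hA a haA
    have h2 := hB a haB
    exact hne (h2 ▸ this)
  · intro x hx
    rw [Set.mem_iInter]
    exact fun k => basS_subset_iter hall k hx
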